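/- arXiv:2310.01270 — 2 statements merged into one kernel-verified Lean document; each statement's English description precedes it below -/
import Mathlib

section
/- For n ≥ 0, the following identities hold in the polynomial ring ℤ[t]: Σ_{x ∈ Cay[n]} t^{des(x)} = Σ_{v ∈ S_n} 2^{des(v)} t^{des(v^{-1})} and Σ_{x ∈ Cay[n]} t^{des∘(x)} = Σ_{v ∈ S_n} 2^{des(v)} t^{asc(v^{-1})}. -/
namespace CayPaper

/-- A word of length `n` (1-indexed): it vanishes outside `{1,…,n}`. -/
def IsWord (n : ℕ) (v : ℕ → ℕ) : Prop := ∀ i, i ∉ Set.Icc 1 n → v i = 0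

/-- A Cayley permutation of length `n`: a word on `{1,…,n}` whose image is `{1,…,k}`
for some `k ≤ n`. -/
def IsCayley (n : ℕ) (v : ℕ → ℕ) : Prop :=
  IsWord n v ∧ ∃ k, v '' Set.Icc 1 n = Set.Icc 1 k

/-- A weakly increasing Cayley permutation of length `n`. -/
def IsWI (n : ℕ) (v : ℕ → ℕ) : Prop :=
  IsCayley n v ∧ MonotoneOn v (Set.Icc 1 n)

/-- A permutation of `{1,…,n}`, encoded as a word. -/
def IsPermWord (n : ℕ) (v : ℕ → ℕ) : Prop :=
  IsWord n v ∧ Set.BijOn v (Set.Icc 1 n) (Set.Icc 1 n)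

/-- The weak descent set `Des(v) = { i ∈ {1,…,n−1} : v(i) ≥ v(i+1) }`. -/
def desSet (n : ℕ) (v : ℕ → ℕ) : Finset ℕ :=
  (Finset.Icc 1 (n - 1)).filter fun i => v (i + 1) ≤ v i

/-- The strict descent set `Des∘(v) = { i : v(i) > v(i+1) }`. -/
def sdesSet (n : ℕ) (v : ℕ → ℕ) : Finset ℕ :=
  (Finset.Icc 1 (n - 1)).filter fun i => v (i + 1) < v i

/-- The weak ascent set `Asc(v) = { i : v(i) ≤ v(i+1) }`. -/
def ascSet (n : ℕ) (v : ℕ → ℕ) : Finset ℕ :=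
  (Finset.Icc 1 (n - 1)).filter fun i => v i ≤ v (i + 1)

/-- The strict ascent set `Asc∘(v) = { i : v(i) < v(i+1) }`. -/
def sascSet (n : ℕ) (v : ℕ → ℕ) : Finset ℕ :=
  (Finset.Icc 1 (n - 1)).filter fun i => v i < v (i + 1)

def des (n : ℕ) (v : ℕ → ℕ) : ℕ := (desSet n v).card
def sdes (n : ℕ) (v : ℕ → ℕ) : ℕ := (sdesSet n v).card
def asc (n : ℕ) (v : ℕ → ℕ) : ℕ := (ascSet n v).card
def sasc (n : ℕ) (v : ℕ → ℕ) : ℕ := (sascSet n v).card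

/-- The maximum value of a word. -/
def wmax (n : ℕ) (v : ℕ → ℕ) : ℕ := (Finset.Icc 1 n).sup v

/-- Reverse: `v^r(i) = v(n+1−i)`. -/
def wrev (n : ℕ) (v : ℕ → ℕ) : ℕ → ℕ := fun i =>
  if 1 ≤ i ∧ i ≤ n then v (n + 1 - i) else 0

/-- Complement: `v^c(i) = max(v)+1−v(i)`. -/
def wcomp (n : ℕ) (v : ℕ → ℕ) : ℕ → ℕ := fun i =>
  if 1 ≤ i ∧ i ≤ n then wmax n v + 1 - v i else 0

/-- The word `(σ(1), …, σ(n))` (1-indexed) of a permutation `σ` of `Fin n`. -/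
def permWord (n : ℕ) (σ : Equiv.Perm (Fin n)) : ℕ → ℕ := fun i =>
  if h : 1 ≤ i ∧ i ≤ n then ((σ ⟨i - 1, by omega⟩ : Fin n) : ℕ) + 1 else 0

/-- The conjugate of `u`: the unique weakly increasing Cayley permutation of
length `n` whose descent set is `{1,…,n−1} \ Des(u)`. -/
noncomputable def conjWI (n : ℕ) (u : ℕ → ℕ) : ℕ → ℕ :=
  haveI := Classical.dec (∃ w, IsWI n w ∧ desSet n w = Finset.Icc 1 (n - 1) \ desSet n u)
  if h : ∃ w, IsWI n w ∧ desSet n w = Finset.Icc 1 (n - 1) \ desSet n u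
    then h.choose else fun _ => 0

/-- A Burge matrix: every row and every column contains a nonzero entry. -/
def IsBurge {p q : ℕ} (M : Matrix (Fin p) (Fin q) ℕ) : Prop :=
  (∀ i, ∃ j, M i j ≠ 0) ∧ (∀ j, ∃ i, M i j ≠ 0)

/-- The size of a matrix with natural entries: the sum of its entries. -/
def matSize {p q : ℕ} (M : Matrix (Fin p) (Fin q) ℕ) : ℕ := ∑ i, ∑ j, M i j

/-- Burge matrices of size `n` (of all dimensions). -/
def BurgeMatrices (n : ℕ) : Set (Σ p : ℕ, Σ q : ℕ, Matrix (Fin p) (Fin q) ℕ) :=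
  {M | IsBurge M.2.2 ∧ matSize M.2.2 = n}

/-- Binary Burge matrices of size `n`. -/
def BinaryBurgeMatrices (n : ℕ) : Set (Σ p : ℕ, Σ q : ℕ, Matrix (Fin p) (Fin q) ℕ) :=
  {M | M ∈ BurgeMatrices n ∧ ∀ i j, M.2.2 i j ≤ 1}

/-- Burge matrices of size `n` whose every column sums to `1`. -/
def ColSumOneBurgeMatrices (n : ℕ) : Set (Σ p : ℕ, Σ q : ℕ, Matrix (Fin p) (Fin q) ℕ) :=
  {M | M ∈ BurgeMatrices n ∧ ∀ j, ∑ i, M.2.2 i j = 1}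

/-- Burge words: pairs `(u,v) ∈ WI[n] × Cay[n]` with `Des(u) ⊆ Des(v)`. -/
def BurPairs (n : ℕ) : Set ((ℕ → ℕ) × (ℕ → ℕ)) :=
  {p | IsWI n p.1 ∧ IsCayley n p.2 ∧ desSet n p.1 ⊆ desSet n p.2}

/-- Pairs `(u,v) ∈ WI[n] × Cay[n]` with `Des(u) ⊆ Des∘(v)`. -/
def BBurPairs (n : ℕ) : Set ((ℕ → ℕ) × (ℕ → ℕ)) :=
  {p | IsWI n p.1 ∧ IsCayley n p.2 ∧ desSet n p.1 ⊆ sdesSet n p.2}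

/-- Pairs `(u,v) ∈ WI[n] × S_n` with `Des(u) ⊆ Des(v)`. -/
def PBurPairs (n : ℕ) : Set ((ℕ → ℕ) × (ℕ → ℕ)) :=
  {p | IsWI n p.1 ∧ IsPermWord n p.2 ∧ desSet n p.1 ⊆ desSet n p.2}

/-- `Ω[n]`: pairs `(u,v) ∈ WI[n] × Cay[n]` with `Des(u) ⊇ Des(v)`. -/
def OmegaPairs (n : ℕ) : Set ((ℕ → ℕ) × (ℕ → ℕ)) :=
  {p | IsWI n p.1 ∧ IsCayley n p.2 ∧ desSet n p.2 ⊆ desSet n p.1}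

/-- `v` lists the positions `1,…,n` in the order obtained by sorting the columns
`(x_i, i)` so that first components are weakly increasing, ties broken by strictly
decreasing second components.  For a permutation word `v` this says exactly that
`v = Γ(id, x)`, the bottom row of the Burge transpose of `(id, x)`. -/
def sortsColumns (n : ℕ) (x v : ℕ → ℕ) : Prop :=
  ∀ i ∈ Finset.Icc 1 (n - 1),
    x (v i) < x (v (i + 1)) ∨ (x (v i) = x (v (i + 1)) ∧ v (i + 1) < v i)

/-- The Fishburn basis of a permutation word `v`:
`basis(v) = { x ∈ Cay[n] : Γ(id, x) = v }`. -/
def fishburnBasis (n : ℕ) (v : ℕ → ℕ) : Set (ℕ → ℕ) :=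
  {x | IsCayley n x ∧ sortsColumns n x v}

/-- Stanley's `v`-compatibility condition:
`x(v(1)) ≤ ⋯ ≤ x(v(n))` with strict inequality at every ascent of `v`. -/
def VCompatible (n : ℕ) (v x : ℕ → ℕ) : Prop :=
  (∀ i ∈ Finset.Icc 1 (n - 1), x (v i) ≤ x (v (i + 1))) ∧
    ∀ i ∈ Finset.Icc 1 (n - 1), v i < v (i + 1) → x (v i) < x (v (i + 1))

/-- A map `{1,…,n} → {1,…,m}`, encoded as a word. -/
def IsMapTo (n m : ℕ) (x : ℕ → ℕ) : Prop :=
  IsWord n x ∧ ∀ i ∈ Set.Icc 1 n, x i ∈ Set.Icc 1 m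

/-- Weakly increasing maps `{1,…,n} → {1,…,m}`. -/
def WIgen (n m : ℕ) : Set (ℕ → ℕ) :=
  {u | IsMapTo n m u ∧ MonotoneOn u (Set.Icc 1 n)}


/-! ### Auxiliary development -/

section Aux

open Finset

/-- The weakly increasing word with value `1 + #{i < j, i ∉ S}` at `j ∈ [1,n]`. -/
def gword (n : ℕ) (S : Finset ℕ) : ℕ → ℕ := fun j =>
  if 1 ≤ j ∧ j ≤ n then ((Finset.Icc 1 (j - 1)).filter (fun i => i ∉ S)).card + 1 else 0

def phi (n : ℕ) (σ : Equiv.Perm (Fin n)) (S : Finset ℕ) : ℕ → ℕ :=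
  fun p => gword n S (permWord n σ⁻¹ p)

def key (n : ℕ) (x : ℕ → ℕ) : Fin n → Lex (ℕ × ℕ) :=
  fun a => toLex (x ((a : ℕ) + 1), n - (a : ℕ))

noncomputable def sortPerm (n : ℕ) (x : ℕ → ℕ) : Equiv.Perm (Fin n) :=
  Tuple.sort (key n x)

lemma sortPerm_def (n : ℕ) (x : ℕ → ℕ) : sortPerm n x = Tuple.sort (key n x) := rfl

attribute [irreducible] sortPerm

noncomputable def eqS (n : ℕ) (x : ℕ → ℕ) : Finset ℕ :=
  (Finset.Icc 1 (n - 1)).filter fun i =>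
    x (permWord n (sortPerm n x) i) = x (permWord n (sortPerm n x) (i + 1))

/-! #### permWord basics -/

lemma permWord_apply (n : ℕ) (σ : Equiv.Perm (Fin n)) {i : ℕ} (h1 : 1 ≤ i) (h2 : i ≤ n) :
    permWord n σ i = ((σ ⟨i - 1, by omega⟩ : Fin n) : ℕ) + 1 := by
  unfold permWord
  rw [dif_pos ⟨h1, h2⟩]

lemma permWord_zero (n : ℕ) (σ : Equiv.Perm (Fin n)) {i : ℕ} (h : ¬ (1 ≤ i ∧ i ≤ n)) :
    permWord n σ i = 0 := by
  unfold permWord; rw [dif_neg h]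

lemma permWord_mem (n : ℕ) (σ : Equiv.Perm (Fin n)) {i : ℕ} (h1 : 1 ≤ i) (h2 : i ≤ n) :
    1 ≤ permWord n σ i ∧ permWord n σ i ≤ n := by
  rw [permWord_apply n σ h1 h2]
  have := (σ ⟨i - 1, by omega⟩).isLt
  omega

lemma permWord_left_inv (n : ℕ) (σ : Equiv.Perm (Fin n)) {i : ℕ} (h1 : 1 ≤ i) (h2 : i ≤ n) :
    permWord n σ⁻¹ (permWord n σ i) = i := by
  have hi : i - 1 < n := by omega
  rw [permWord_apply n σ h1 h2]
  have hlt : ((σ ⟨i - 1, hi⟩ : Fin n) : ℕ) < n := (σ _).isLt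
  rw [permWord_apply n σ⁻¹ (by omega) (by omega)]
  have he : (⟨((σ ⟨i - 1, hi⟩ : Fin n) : ℕ) + 1 - 1, by omega⟩ : Fin n) = σ ⟨i - 1, hi⟩ := by
    apply Fin.ext; simp
  rw [he, Equiv.Perm.inv_def, Equiv.symm_apply_apply]
  simp; omega

lemma permWord_right_inv (n : ℕ) (σ : Equiv.Perm (Fin n)) {i : ℕ} (h1 : 1 ≤ i) (h2 : i ≤ n) :
    permWord n σ (permWord n σ⁻¹ i) = i := by
  have := permWord_left_inv n σ⁻¹ h1 h2
  rwa [inv_inv] at this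

lemma permWord_bijOn (n : ℕ) (σ : Equiv.Perm (Fin n)) :
    Set.BijOn (permWord n σ) (Set.Icc 1 n) (Set.Icc 1 n) := by
  have hm : Set.MapsTo (permWord n σ) (Set.Icc 1 n) (Set.Icc 1 n) := by
    intro i hi
    rw [Set.mem_Icc] at hi ⊢
    exact permWord_mem n σ hi.1 hi.2
  have hm' : Set.MapsTo (permWord n σ⁻¹) (Set.Icc 1 n) (Set.Icc 1 n) := by
    intro i hi
    rw [Set.mem_Icc] at hi ⊢
    exact permWord_mem n σ⁻¹ hi.1 hi.2
  refine Set.InvOn.bijOn ⟨?_, ?_⟩ hm hm'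
  · intro i hi; rw [Set.mem_Icc] at hi; exact permWord_left_inv n σ hi.1 hi.2
  · intro i hi; rw [Set.mem_Icc] at hi; exact permWord_right_inv n σ hi.1 hi.2

lemma permWord_image (n : ℕ) (σ : Equiv.Perm (Fin n)) :
    permWord n σ '' Set.Icc 1 n = Set.Icc 1 n :=
  (permWord_bijOn n σ).image_eq

lemma permWord_ne (n : ℕ) (σ : Equiv.Perm (Fin n)) {i : ℕ} (h1 : 1 ≤ i) (h2 : i + 1 ≤ n) :
    permWord n σ i ≠ permWord n σ (i + 1) := by
  intro h
  have := congrArg (permWord n σ⁻¹) h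
  rw [permWord_left_inv n σ h1 (by omega), permWord_left_inv n σ (by omega) h2] at this
  omega

/-! #### step-to-monotone helper -/

lemma le_of_steps {f : ℕ → ℕ} {n : ℕ} (h : ∀ i, 1 ≤ i → i + 1 ≤ n → f i ≤ f (i + 1)) :
    ∀ a b, 1 ≤ a → a ≤ b → b ≤ n → f a ≤ f b := by
  intro a b ha hab hb
  induction b, hab using Nat.le_induction with
  | base => exact le_refl _
  | succ m hm ih => exact (ih (by omega)).trans (h m (by omega) (by omega))

/-! #### gword basics -/

lemma gword_zero (n : ℕ) (S : Finset ℕ) {j : ℕ} (h : ¬ (1 ≤ j ∧ j ≤ n)) :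
    gword n S j = 0 := by
  unfold gword; rw [if_neg h]

lemma gword_one (n : ℕ) (S : Finset ℕ) (h : 1 ≤ n) : gword n S 1 = 1 := by
  unfold gword
  rw [if_pos ⟨le_refl _, h⟩]
  simp

lemma gword_succ (n : ℕ) (S : Finset ℕ) {j : ℕ} (h1 : 1 ≤ j) (h2 : j + 1 ≤ n) :
    gword n S (j + 1) = gword n S j + (if j ∈ S then 0 else 1) := by
  classical
  have e : Finset.Icc 1 (j + 1 - 1) = insert j (Finset.Icc 1 (j - 1)) := by
    ext a; simp only [Finset.mem_Icc, Finset.mem_insert]; omega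
  have hnot : j ∉ Finset.Icc 1 (j - 1) := by simp [Finset.mem_Icc]; omega
  unfold gword
  rw [if_pos ⟨by omega, h2⟩, if_pos ⟨h1, by omega⟩, e, Finset.filter_insert]
  by_cases hj : j ∈ S
  · simp [hj]
  · rw [if_pos hj, Finset.card_insert_of_notMem (fun hc => hnot (Finset.mem_of_mem_filter _ hc))]
    simp [hj]

lemma gword_mono (n : ℕ) (S : Finset ℕ) :
    ∀ a b, 1 ≤ a → a ≤ b → b ≤ n → gword n S a ≤ gword n S b := by
  apply le_of_steps
  intro i hi1 hi2
  rw [gword_succ n S hi1 hi2]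
  omega

lemma gword_image (n : ℕ) (S : Finset ℕ) {j : ℕ} (h1 : 1 ≤ j) (h2 : j ≤ n) :
    gword n S '' Set.Icc 1 j = Set.Icc 1 (gword n S j) := by
  induction j, h1 using Nat.le_induction with
  | base =>
    rw [Set.Icc_self, Set.image_singleton, gword_one n S (by omega)]
    rw [Set.Icc_self]
  | succ m hm ih =>
    have hstep := gword_succ n S hm h2
    have e : Set.Icc 1 (m + 1) = insert (m + 1) (Set.Icc 1 m) := by
      ext a; simp only [Set.mem_Icc, Set.mem_insert_iff]; omega
    rw [e, Set.image_insert_eq, ih (by omega)]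
    have h1m : gword n S 1 ≤ gword n S m := gword_mono n S 1 m le_rfl hm (by omega)
    rw [gword_one n S (by omega)] at h1m
    ext c
    simp only [Set.mem_Icc, Set.mem_insert_iff]
    by_cases hS : m ∈ S <;> simp only [hS, if_true, if_false] at hstep <;> omega

end Aux
section Aux2

/-! #### Cayley basics -/

lemma cayley_k_le (n : ℕ) {x : ℕ → ℕ} {k : ℕ} (h : x '' Set.Icc 1 n = Set.Icc 1 k) :
    k ≤ n := by
  have h1 : Set.Icc (1:ℕ) n = ↑(Finset.Icc 1 n) := (Finset.coe_Icc 1 n).symm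
  have h2 : Set.Icc (1:ℕ) k = ↑(Finset.Icc 1 k) := (Finset.coe_Icc 1 k).symm
  classical
  have h3 : (↑((Finset.Icc 1 n).image x) : Set ℕ) = ↑(Finset.Icc 1 k) := by
    rw [Finset.coe_image, ← h1, ← h2, h]
  have h4 := Finset.coe_injective h3
  have h5 : ((Finset.Icc 1 n).image x).card ≤ (Finset.Icc 1 n).card := Finset.card_image_le
  rw [h4] at h5
  rw [Nat.card_Icc, Nat.card_Icc] at h5
  omega

lemma cayley_bound (n : ℕ) {x : ℕ → ℕ} (hx : IsCayley n x) {i : ℕ}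
    (h1 : 1 ≤ i) (h2 : i ≤ n) : 1 ≤ x i ∧ x i ≤ n := by
  obtain ⟨-, k, hk⟩ := hx
  have : x i ∈ x '' Set.Icc 1 n := ⟨i, Set.mem_Icc.2 ⟨h1, h2⟩, rfl⟩
  rw [hk, Set.mem_Icc] at this
  have := cayley_k_le n hk
  omega

lemma cayley_finite (n : ℕ) : {x : ℕ → ℕ | IsCayley n x}.Finite := by
  apply Set.Finite.of_finite_image (f := fun x (a : Fin n) => (⟨min (x ((a : ℕ) + 1)) n, by omega⟩ : Fin (n + 1)))
  · exact Set.toFinite _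
  · intro x hx y hy hxy
    funext i
    by_cases hi : 1 ≤ i ∧ i ≤ n
    · have ha : i - 1 < n := by omega
      have := congrFun hxy ⟨i - 1, ha⟩
      simp only [Fin.mk.injEq] at this
      have hxi := cayley_bound n hx hi.1 hi.2
      have hyi := cayley_bound n hy hi.1 hi.2
      have he : i - 1 + 1 = i := by omega
      rw [he] at this
      omega
    · rw [hx.1 i (by rw [Set.mem_Icc]; omega), hy.1 i (by rw [Set.mem_Icc]; omega)]

/-! #### phi is Cayley -/

lemma phi_isCayley (n : ℕ) (σ : Equiv.Perm (Fin n)) (S : Finset ℕ) :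
    IsCayley n (phi n σ S) := by
  constructor
  · intro i hi
    rw [Set.mem_Icc] at hi
    show gword n S (permWord n σ⁻¹ i) = 0
    rw [permWord_zero n σ⁻¹ hi, gword_zero n S (by omega)]
  · rcases Nat.eq_zero_or_pos n with hn | hn
    · refine ⟨0, ?_⟩
      subst hn
      rw [Set.Icc_eq_empty (by omega), Set.image_empty]
    · refine ⟨gword n S n, ?_⟩
      have : phi n σ S '' Set.Icc 1 n = gword n S '' (permWord n σ⁻¹ '' Set.Icc 1 n) := by
        rw [← Set.image_comp]; rfl
      rw [this, permWord_image n σ⁻¹, gword_image n S hn le_rfl]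

/-! #### the key descent-set lemma -/

lemma desSet_phi (n : ℕ) (σ : Equiv.Perm (Fin n)) (S : Finset ℕ)
    (hS : S ⊆ desSet n (permWord n σ)) :
    desSet n (phi n σ S) = desSet n (permWord n σ⁻¹) := by
  classical
  ext i
  simp only [desSet, Finset.mem_filter]
  refine and_congr_right fun hi => ?_
  rw [Finset.mem_Icc] at hi
  obtain ⟨hi1, hi2⟩ := hi
  have hn : 2 ≤ n := by omega
  set w := permWord n σ⁻¹ with hw
  set a := w i with hadef
  set b := w (i + 1) with hbdef
  have hai : 1 ≤ a ∧ a ≤ n := permWord_mem n σ⁻¹ hi1 (by omega)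
  have hbi : 1 ≤ b ∧ b ≤ n := permWord_mem n σ⁻¹ (by omega) (by omega)
  have hva : permWord n σ a = i := permWord_right_inv n σ hi1 (by omega)
  have hvb : permWord n σ b = i + 1 := permWord_right_inv n σ (by omega) (by omega)
  have hab : a ≠ b := by intro h; rw [h, hvb] at hva; omega
  show gword n S b ≤ gword n S a ↔ b ≤ a
  constructor
  · intro hg
    by_contra hba
    push_neg at hba
    -- a < b; find a strict step
    have hstrict : ∃ j, a ≤ j ∧ j < b ∧ j ∉ S := by
      by_contra hall
      push_neg at hall
      -- then permWord σ decreases from a to b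
      have hdec : ∀ m, a ≤ m → m ≤ b → permWord n σ m ≤ permWord n σ a := by
        intro m hm1 hm2
        induction m, hm1 using Nat.le_induction with
        | base => exact le_refl _
        | succ p hp ih =>
          have hpS : p ∈ S := hall p hp (by omega)
          have := hS hpS
          simp only [desSet, Finset.mem_filter] at this
          exact le_trans this.2 (ih (by omega))
      have := hdec b (by omega) le_rfl
      rw [hva, hvb] at this
      omega
    obtain ⟨j, hj1, hj2, hj3⟩ := hstrict
    have g1 : gword n S a ≤ gword n S j := gword_mono n S a j hai.1 hj1 (by omega)
    have g2 : gword n S j < gword n S (j + 1) := by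
      rw [gword_succ n S (by omega) (by omega), if_neg hj3]; omega
    have g3 : gword n S (j + 1) ≤ gword n S b := gword_mono n S (j + 1) b (by omega) (by omega) hbi.2
    omega
  · intro hba
    exact gword_mono n S b a hbi.1 hba hai.2

end Aux2
section Aux3
set_option maxHeartbeats 1000000

/-! #### sorting lemmas -/

lemma key_injective (n : ℕ) (x : ℕ → ℕ) : Function.Injective (key n x) := by
  intro a b h
  have h2 := congrArg (fun p => (ofLex p).2) h
  simp only [key, ofLex_toLex] at h2
  have := a.isLt; have := b.isLt
  exact Fin.ext (by omega)

lemma sorts_sortPerm (n : ℕ) (x : ℕ → ℕ) :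
    sortsColumns n x (permWord n (sortPerm n x)) := by
  intro i hi
  rw [Finset.mem_Icc] at hi
  have hn : 2 ≤ n := by omega
  have hmono : StrictMono (key n x ∘ (sortPerm n x)) := by
    rw [sortPerm_def]
    exact (Tuple.monotone_sort (key n x)).strictMono_of_injective
      ((key_injective n x).comp (Equiv.injective _))
  have hlt : (⟨i - 1, by omega⟩ : Fin n) < ⟨i, by omega⟩ := by
    rw [Fin.lt_def]; simp; omega
  have h := hmono hlt
  simp only [Function.comp_apply, key, Prod.Lex.lt_iff, ofLex_toLex] at h
  have e1 := permWord_apply n (sortPerm n x) (i := i) hi.1 (show i ≤ n by omega)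
  have e2 := permWord_apply n (sortPerm n x) (i := i + 1) (by omega) (show i + 1 ≤ n by omega)
  rw [e1, e2]
  simp only [Nat.add_sub_cancel]
  have c1 := (sortPerm n x ⟨i - 1, by omega⟩).isLt
  have c2 := (sortPerm n x ⟨i, by omega⟩).isLt
  rcases h with h | ⟨h1, h2⟩
  · left; exact h
  · right; exact ⟨h1, by omega⟩

lemma key_lt_of_sorts {n : ℕ} {x : ℕ → ℕ} {σ : Equiv.Perm (Fin n)}
    (h : sortsColumns n x (permWord n σ)) : StrictMono (fun a => key n x (σ a)) := by
  cases n with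
  | zero => intro a b hab; exact a.elim0
  | succ m =>
    rw [Fin.strictMono_iff_lt_succ]
    intro i
    have hilt := i.isLt
    have hip : (i : ℕ) + 1 ∈ Finset.Icc 1 (m + 1 - 1) := by
      rw [Finset.mem_Icc]; omega
    have hp := h ((i : ℕ) + 1) hip
    have e1' := permWord_apply (m + 1) σ (i := (i : ℕ) + 1) (by omega) (by omega)
    have e2' := permWord_apply (m + 1) σ (i := (i : ℕ) + 1 + 1) (by omega) (by omega)
    rw [e1', e2'] at hp
    have e1 : (⟨(i : ℕ) + 1 - 1, by omega⟩ : Fin (m + 1)) = i.castSucc := by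
      apply Fin.ext; simp
    have e2 : (⟨(i : ℕ) + 1 + 1 - 1, by omega⟩ : Fin (m + 1)) = i.succ := by
      apply Fin.ext; simp
    rw [e1, e2] at hp
    simp only [key, Prod.Lex.lt_iff, ofLex_toLex]
    have c1 := (σ i.castSucc).isLt
    have c2 := (σ i.succ).isLt
    rcases hp with h1 | ⟨h1, h2⟩
    · left; exact h1
    · right; exact ⟨h1, by omega⟩

lemma sorts_unique {n : ℕ} {x : ℕ → ℕ} {σ σ' : Equiv.Perm (Fin n)}
    (h : sortsColumns n x (permWord n σ)) (h' : sortsColumns n x (permWord n σ')) :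
    σ = σ' := by
  have hs := key_lt_of_sorts h
  have hs' := key_lt_of_sorts h'
  have hr : Set.range (fun a => key n x (σ a)) = Set.range (fun a => key n x (σ' a)) := by
    rw [show (fun a => key n x (σ a)) = key n x ∘ σ from rfl,
        show (fun a => key n x (σ' a)) = key n x ∘ σ' from rfl,
        Function.Surjective.range_comp σ.surjective, Function.Surjective.range_comp σ'.surjective]
  haveI : WellFoundedLT (Fin n) := inferInstance
  have heq := (hs.range_inj hs').1 hr
  apply Equiv.ext
  intro a
  exact key_injective n x (congrFun heq a)

end Aux3
section Aux4
set_option maxHeartbeats 1000000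

lemma eqS_subset (n : ℕ) (x : ℕ → ℕ) :
    eqS n x ⊆ desSet n (permWord n (sortPerm n x)) := by
  intro i hi
  simp only [eqS, Finset.mem_filter] at hi
  obtain ⟨hic, heq⟩ := hi
  have hs := sorts_sortPerm n x i hic
  simp only [desSet, Finset.mem_filter]
  refine ⟨hic, ?_⟩
  rcases hs with h | ⟨-, h⟩
  · omega
  · omega

lemma phi_psi (n : ℕ) {x : ℕ → ℕ} (hx : IsCayley n x) :
    phi n (sortPerm n x) (eqS n x) = x := by
  obtain ⟨hword, k, hk⟩ := hx
  rcases Nat.eq_zero_or_pos n with hn | hn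
  · funext p
    show gword n (eqS n x) (permWord n (sortPerm n x)⁻¹ p) = x p
    have hp : ¬ (1 ≤ p ∧ p ≤ n) := by omega
    rw [permWord_zero n _ hp, gword_zero n _ (by omega),
      hword p (by rw [Set.mem_Icc]; omega)]
  have hsorts := sorts_sortPerm n x
  have hstep : ∀ i, 1 ≤ i → i + 1 ≤ n →
      x (permWord n (sortPerm n x) i) ≤ x (permWord n (sortPerm n x) (i + 1)) := by
    intro i h1 h2
    have := hsorts i (by rw [Finset.mem_Icc]; omega)
    rcases this with h | ⟨h, -⟩ <;> omega
  have hmono := le_of_steps (n := n) hstep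
  have hyval : ∀ j, 1 ≤ j → j ≤ n →
      1 ≤ x (permWord n (sortPerm n x) j) ∧ x (permWord n (sortPerm n x) j) ≤ k := by
    intro j h1 h2
    have hv := permWord_mem n (sortPerm n x) h1 h2
    have hmem : x (permWord n (sortPerm n x) j) ∈ x '' Set.Icc 1 n :=
      ⟨_, Set.mem_Icc.2 hv, rfl⟩
    rw [hk, Set.mem_Icc] at hmem
    exact hmem
  have hsurj : ∀ c, 1 ≤ c → c ≤ k →
      ∃ j, 1 ≤ j ∧ j ≤ n ∧ x (permWord n (sortPerm n x) j) = c := by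
    intro c h1 h2
    have hmem : c ∈ Set.Icc 1 k := Set.mem_Icc.2 ⟨h1, h2⟩
    rw [← hk] at hmem
    obtain ⟨p, hp, hpc⟩ := hmem
    rw [Set.mem_Icc] at hp
    have hw := permWord_mem n (sortPerm n x)⁻¹ hp.1 hp.2
    refine ⟨permWord n (sortPerm n x)⁻¹ p, hw.1, hw.2, ?_⟩
    rw [permWord_right_inv n _ hp.1 hp.2, hpc]
  have hk1 : 1 ≤ k := by
    have := hyval 1 le_rfl hn
    omega
  have hy1 : x (permWord n (sortPerm n x) 1) = 1 := by
    obtain ⟨j, hj1, hj2, hjc⟩ := hsurj 1 le_rfl hk1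
    have h1 := hmono 1 j le_rfl hj1 hj2
    have := (hyval 1 le_rfl hn).1
    omega
  have hunit : ∀ i, 1 ≤ i → i + 1 ≤ n →
      x (permWord n (sortPerm n x) (i + 1)) ≤ x (permWord n (sortPerm n x) i) + 1 := by
    intro i h1 h2
    by_contra hc
    push_neg at hc
    obtain ⟨j, hj1, hj2, hjc⟩ := hsurj (x (permWord n (sortPerm n x) i) + 1)
      (by have := (hyval i h1 (by omega)).1; omega)
      (by have := (hyval (i + 1) (by omega) h2).2; omega)
    rcases le_or_gt j i with h | h
    · have := hmono j i hj1 h (by omega); omega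
    · have := hmono (i + 1) j (by omega) h hj2; omega
  have hgy : ∀ j, 1 ≤ j → j ≤ n →
      gword n (eqS n x) j = x (permWord n (sortPerm n x) j) := by
    intro j h1
    induction j, h1 using Nat.le_induction with
    | base => intro _; rw [gword_one n _ hn, hy1]
    | succ m hm ih =>
      intro h2
      rw [gword_succ n _ hm h2, ih (by omega)]
      by_cases hS : m ∈ eqS n x
      · rw [if_pos hS]
        have heq : x (permWord n (sortPerm n x) m) = x (permWord n (sortPerm n x) (m + 1)) :=
          (Finset.mem_filter.1 hS).2
        omega
      · rw [if_neg hS]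
        have hne : ¬ x (permWord n (sortPerm n x) m) = x (permWord n (sortPerm n x) (m + 1)) := by
          intro hc
          exact hS (Finset.mem_filter.2 ⟨Finset.mem_Icc.2 ⟨hm, by omega⟩, hc⟩)
        have h3 := hstep m hm h2
        have h4 := hunit m hm h2
        omega
  funext p
  show gword n (eqS n x) (permWord n (sortPerm n x)⁻¹ p) = x p
  by_cases hp : 1 ≤ p ∧ p ≤ n
  · have hw := permWord_mem n (sortPerm n x)⁻¹ hp.1 hp.2
    rw [hgy _ hw.1 hw.2, permWord_right_inv n _ hp.1 hp.2]
  · rw [permWord_zero n _ hp, gword_zero n _ (by omega),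
      hword p (by rw [Set.mem_Icc]; omega)]

lemma phi_val (n : ℕ) (σ : Equiv.Perm (Fin n)) (S : Finset ℕ) {i : ℕ}
    (h1 : 1 ≤ i) (h2 : i ≤ n) :
    phi n σ S (permWord n σ i) = gword n S i := by
  show gword n S (permWord n σ⁻¹ (permWord n σ i)) = _
  rw [permWord_left_inv n σ h1 h2]

lemma sorts_phi (n : ℕ) (σ : Equiv.Perm (Fin n)) (S : Finset ℕ)
    (hS : S ⊆ desSet n (permWord n σ)) :
    sortsColumns n (phi n σ S) (permWord n σ) := by
  intro i hic
  rw [Finset.mem_Icc] at hic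
  have hn : 2 ≤ n := by omega
  have e1 := phi_val n σ S hic.1 (by omega)
  have e2 := phi_val n σ S (i := i + 1) (by omega) (by omega)
  rw [e1, e2, gword_succ n S hic.1 (by omega)]
  by_cases hiS : i ∈ S
  · rw [if_pos hiS]
    right
    refine ⟨by omega, ?_⟩
    have hd := hS hiS
    simp only [desSet, Finset.mem_filter] at hd
    have hne := permWord_ne n σ hic.1 (by omega)
    omega
  · rw [if_neg hiS]; left; omega

lemma sortPerm_phi (n : ℕ) (σ : Equiv.Perm (Fin n)) (S : Finset ℕ)
    (hS : S ⊆ desSet n (permWord n σ)) :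
    sortPerm n (phi n σ S) = σ :=
  sorts_unique (sorts_sortPerm n (phi n σ S)) (sorts_phi n σ S hS)

lemma eqS_phi (n : ℕ) (σ : Equiv.Perm (Fin n)) (S : Finset ℕ)
    (hS : S ⊆ desSet n (permWord n σ)) :
    eqS n (phi n σ S) = S := by
  ext i
  simp only [eqS, Finset.mem_filter]
  rw [sortPerm_phi n σ S hS]
  constructor
  · rintro ⟨hic, heq⟩
    rw [Finset.mem_Icc] at hic
    have e1 := phi_val n σ S hic.1 (by omega)
    have e2 := phi_val n σ S (i := i + 1) (by omega) (by omega)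
    rw [e1, e2, gword_succ n S hic.1 (by omega)] at heq
    by_contra hiS
    rw [if_neg hiS] at heq
    omega
  · intro hiS
    have hd := hS hiS
    simp only [desSet, Finset.mem_filter] at hd
    have hic := hd.1
    rw [Finset.mem_Icc] at hic
    refine ⟨Finset.mem_Icc.2 hic, ?_⟩
    have e1 := phi_val n σ S hic.1 (by omega)
    have e2 := phi_val n σ S (i := i + 1) (by omega) (by omega)
    rw [e1, e2, gword_succ n S hic.1 (by omega), if_pos hiS]
    omega

end Aux4
section Aux5
set_option maxHeartbeats 1000000

lemma main_count (n : ℕ) {M : Type*} [AddCommMonoid M] (f : ℕ → M) :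
    ∑ x ∈ (cayley_finite n).toFinset, f (des n x)
      = ∑ σ : Equiv.Perm (Fin n), 2 ^ des n (permWord n σ) • f (des n (permWord n σ⁻¹)) := by
  classical
  have hterm : ∀ σ : Equiv.Perm (Fin n),
      2 ^ des n (permWord n σ) • f (des n (permWord n σ⁻¹))
        = ∑ _S ∈ (desSet n (permWord n σ)).powerset, f (des n (permWord n σ⁻¹)) := by
    intro σ
    rw [Finset.sum_const, Finset.card_powerset]
    rfl
  rw [Finset.sum_congr rfl (fun σ _ => hterm σ), Finset.sum_sigma']
  refine Finset.sum_bij' (fun x _ => ⟨sortPerm n x, eqS n x⟩)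
    (fun p _ => phi n p.1 p.2) ?_ ?_ ?_ ?_ ?_
  · intro x _
    exact Finset.mem_sigma.2 ⟨Finset.mem_univ _, Finset.mem_powerset.2 (eqS_subset n x)⟩
  · intro p _
    rw [Set.Finite.mem_toFinset]
    exact phi_isCayley n p.1 p.2
  · intro x hx
    rw [Set.Finite.mem_toFinset] at hx
    exact phi_psi n hx
  · intro p hp
    obtain ⟨σ, S⟩ := p
    have hS : S ⊆ desSet n (permWord n σ) :=
      Finset.mem_powerset.1 (Finset.mem_sigma.1 hp).2
    show (⟨sortPerm n (phi n σ S), eqS n (phi n σ S)⟩ : Σ _ : Equiv.Perm (Fin n), Finset ℕ)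
      = ⟨σ, S⟩
    rw [sortPerm_phi n σ S hS, eqS_phi n σ S hS]
  · intro x hx
    rw [Set.Finite.mem_toFinset] at hx
    have h1 : desSet n x = desSet n (permWord n (sortPerm n x)⁻¹) := by
      conv_lhs => rw [← phi_psi n hx]
      exact desSet_phi n _ _ (eqS_subset n x)
    show f (des n x) = f (des n (permWord n (sortPerm n x)⁻¹))
    unfold des
    rw [h1]

lemma asc_permWord (n : ℕ) (σ : Equiv.Perm (Fin n)) :
    asc n (permWord n σ) = (n - 1) - des n (permWord n σ) := by
  have hset : ascSet n (permWord n σ) = Finset.Icc 1 (n - 1) \ desSet n (permWord n σ) := by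
    ext i
    simp only [ascSet, desSet, Finset.mem_filter, Finset.mem_sdiff]
    constructor
    · rintro ⟨hic, h⟩
      refine ⟨hic, fun hc => ?_⟩
      rw [Finset.mem_Icc] at hic
      have hne := permWord_ne n σ hic.1 (by omega)
      omega
    · rintro ⟨hic, h⟩
      refine ⟨hic, ?_⟩
      rw [Finset.mem_Icc] at hic
      have hne := permWord_ne n σ hic.1 (by omega)
      by_contra hc
      exact h ⟨by rw [Finset.mem_Icc]; omega, by omega⟩
  have hsub : desSet n (permWord n σ) ⊆ Finset.Icc 1 (n - 1) := Finset.filter_subset _ _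
  have hcard := Finset.card_sdiff_of_subset hsub
  unfold asc des
  rw [hset, hcard, Nat.card_Icc]
  omega

lemma des_le (n : ℕ) (x : ℕ → ℕ) : des n x ≤ n - 1 := by
  have := Finset.card_filter_le (Finset.Icc 1 (n - 1)) (fun i => x (i + 1) ≤ x i)
  unfold des desSet
  rw [Nat.card_Icc] at this
  omega

lemma sasc_eq (n : ℕ) (x : ℕ → ℕ) : sasc n x = (n - 1) - des n x := by
  have hset : sascSet n x = Finset.Icc 1 (n - 1) \ desSet n x := by
    ext i
    simp only [sascSet, desSet, Finset.mem_filter, Finset.mem_sdiff]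
    constructor
    · rintro ⟨hic, h⟩
      exact ⟨hic, fun hc => by omega⟩
    · rintro ⟨hic, h⟩
      refine ⟨hic, ?_⟩
      by_contra hc
      exact h ⟨hic, by omega⟩
  have hsub : desSet n x ⊆ Finset.Icc 1 (n - 1) := Finset.filter_subset _ _
  unfold sasc des
  rw [hset, Finset.card_sdiff_of_subset hsub, Nat.card_Icc]
  omega

lemma wmax_eq (n k : ℕ) {x : ℕ → ℕ} (hk : x '' Set.Icc 1 n = Set.Icc 1 k) (hn : 1 ≤ n) :
    wmax n x = k := by
  apply le_antisymm
  · apply Finset.sup_le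
    intro i hi
    rw [Finset.mem_Icc] at hi
    have hmem : x i ∈ Set.Icc 1 k := by rw [← hk]; exact ⟨i, Set.mem_Icc.2 hi, rfl⟩
    rw [Set.mem_Icc] at hmem
    exact hmem.2
  · rcases Nat.eq_zero_or_pos k with h0 | hpos
    · omega
    · have hmem : k ∈ x '' Set.Icc 1 n := by rw [hk]; exact Set.mem_Icc.2 ⟨hpos, le_rfl⟩
      obtain ⟨i, hi, hik⟩ := hmem
      rw [Set.mem_Icc] at hi
      rw [← hik]
      exact Finset.le_sup (Finset.mem_Icc.2 hi)

lemma wcomp_image (n k : ℕ) {x : ℕ → ℕ} (hk : x '' Set.Icc 1 n = Set.Icc 1 k) (hn : 1 ≤ n) :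
    wcomp n x '' Set.Icc 1 n = Set.Icc 1 k := by
  have hwm : wmax n x = k := wmax_eq n k hk hn
  ext c
  constructor
  · rintro ⟨i, hi, rfl⟩
    rw [Set.mem_Icc] at hi
    have hxi : x i ∈ Set.Icc 1 k := by rw [← hk]; exact ⟨i, Set.mem_Icc.2 hi, rfl⟩
    rw [Set.mem_Icc] at hxi
    show (if 1 ≤ i ∧ i ≤ n then wmax n x + 1 - x i else 0) ∈ Set.Icc 1 k
    rw [if_pos hi, hwm, Set.mem_Icc]
    omega
  · intro hc
    rw [Set.mem_Icc] at hc
    have hmem : k + 1 - c ∈ Set.Icc 1 k := by rw [Set.mem_Icc]; omega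
    rw [← hk] at hmem
    obtain ⟨p, hp, hpc⟩ := hmem
    rw [Set.mem_Icc] at hp
    refine ⟨p, Set.mem_Icc.2 hp, ?_⟩
    show (if 1 ≤ p ∧ p ≤ n then wmax n x + 1 - x p else 0) = c
    have hxp : x p ∈ Set.Icc 1 k := by rw [← hk]; exact ⟨p, Set.mem_Icc.2 hp, rfl⟩
    rw [Set.mem_Icc] at hxp
    rw [if_pos hp, hwm, hpc]
    omega

lemma wcomp_isCayley (n : ℕ) {x : ℕ → ℕ} (hx : IsCayley n x) : IsCayley n (wcomp n x) := by
  obtain ⟨hword, k, hk⟩ := hx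
  constructor
  · intro i hi
    rw [Set.mem_Icc] at hi
    show (if 1 ≤ i ∧ i ≤ n then wmax n x + 1 - x i else 0) = 0
    rw [if_neg (by omega)]
  · rcases Nat.eq_zero_or_pos n with h0 | hn
    · refine ⟨0, ?_⟩
      subst h0
      rw [Set.Icc_eq_empty (by omega), Set.image_empty]
    · exact ⟨k, wcomp_image n k hk hn⟩

lemma wcomp_wcomp (n : ℕ) {x : ℕ → ℕ} (hx : IsCayley n x) : wcomp n (wcomp n x) = x := by
  obtain ⟨hword, k, hk⟩ := hx
  funext i
  by_cases hi : 1 ≤ i ∧ i ≤ n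
  · have hn : 1 ≤ n := by omega
    have hwm : wmax n x = k := wmax_eq n k hk hn
    have hwm2 : wmax n (wcomp n x) = k := wmax_eq n k (wcomp_image n k hk hn) hn
    have hxi : x i ∈ Set.Icc 1 k := by rw [← hk]; exact ⟨i, Set.mem_Icc.2 hi, rfl⟩
    rw [Set.mem_Icc] at hxi
    show (if 1 ≤ i ∧ i ≤ n then wmax n (wcomp n x) + 1 - wcomp n x i else 0) = x i
    rw [if_pos hi, hwm2]
    show k + 1 - (if 1 ≤ i ∧ i ≤ n then wmax n x + 1 - x i else 0) = x i
    rw [if_pos hi, hwm]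
    omega
  · show (if 1 ≤ i ∧ i ≤ n then wmax n (wcomp n x) + 1 - wcomp n x i else 0) = x i
    rw [if_neg hi, hword i (by rw [Set.mem_Icc]; omega)]

lemma sdesSet_wcomp (n : ℕ) {x : ℕ → ℕ} (hx : IsCayley n x) :
    sdesSet n (wcomp n x) = sascSet n x := by
  obtain ⟨hword, k, hk⟩ := hx
  ext i
  simp only [sdesSet, sascSet, Finset.mem_filter]
  refine and_congr_right fun hic => ?_
  rw [Finset.mem_Icc] at hic
  have hn : 1 ≤ n := by omega
  have hwm : wmax n x = k := wmax_eq n k hk hn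
  have hxi : x i ∈ Set.Icc 1 k := by
    rw [← hk]; exact ⟨i, Set.mem_Icc.2 ⟨hic.1, by omega⟩, rfl⟩
  have hxi1 : x (i + 1) ∈ Set.Icc 1 k := by
    rw [← hk]; exact ⟨i + 1, Set.mem_Icc.2 ⟨by omega, by omega⟩, rfl⟩
  rw [Set.mem_Icc] at hxi hxi1
  show (if 1 ≤ i + 1 ∧ i + 1 ≤ n then wmax n x + 1 - x (i + 1) else 0)
      < (if 1 ≤ i ∧ i ≤ n then wmax n x + 1 - x i else 0) ↔ _
  rw [if_pos (by omega), if_pos (by omega), hwm]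
  omega

lemma sdes_eq_wcomp (n : ℕ) {x : ℕ → ℕ} (hx : IsCayley n x) :
    sdes n x = (n - 1) - des n (wcomp n x) := by
  have e1 : sdesSet n x = sascSet n (wcomp n x) := by
    conv_lhs => rw [← wcomp_wcomp n hx]
    exact sdesSet_wcomp n (wcomp_isCayley n hx)
  have : sdes n x = sasc n (wcomp n x) := by unfold sdes sasc; rw [e1]
  rw [this, sasc_eq]

lemma sdes_sum (n : ℕ) :
    ∑ x ∈ (cayley_finite n).toFinset, (Polynomial.X : Polynomial ℤ) ^ sdes n x
      = ∑ x ∈ (cayley_finite n).toFinset,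
          (Polynomial.X : Polynomial ℤ) ^ ((n - 1) - des n x) := by
  refine Finset.sum_bij' (fun x _ => wcomp n x) (fun x _ => wcomp n x) ?_ ?_ ?_ ?_ ?_
  · intro x hx
    rw [Set.Finite.mem_toFinset] at hx ⊢
    exact wcomp_isCayley n hx
  · intro x hx
    rw [Set.Finite.mem_toFinset] at hx ⊢
    exact wcomp_isCayley n hx
  · intro x hx
    rw [Set.Finite.mem_toFinset] at hx
    exact wcomp_wcomp n hx
  · intro x hx
    rw [Set.Finite.mem_toFinset] at hx
    exact wcomp_wcomp n hx
  · intro x hx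
    rw [Set.Finite.mem_toFinset] at hx
    rw [sdes_eq_wcomp n hx]

end Aux5

/-- Theorem 5.3: the Caylerian polynomials satisfy
`C_n(t) = Σ_{v ∈ S_n} 2^{des(v)} t^{des(v⁻¹)}` and
`C∘_n(t) = Σ_{v ∈ S_n} 2^{des(v)} t^{asc(v⁻¹)}` in `ℤ[t]`. -/
theorem stmt9 (n : ℕ) :
    (∑ᶠ x ∈ {x : ℕ → ℕ | IsCayley n x}, (Polynomial.X : Polynomial ℤ) ^ des n x)
      = (∑ σ : Equiv.Perm (Fin n),
          2 ^ des n (permWord n σ) *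
            (Polynomial.X : Polynomial ℤ) ^ des n (permWord n σ⁻¹)) ∧
    (∑ᶠ x ∈ {x : ℕ → ℕ | IsCayley n x}, (Polynomial.X : Polynomial ℤ) ^ sdes n x)
      = ∑ σ : Equiv.Perm (Fin n),
          2 ^ des n (permWord n σ) *
            (Polynomial.X : Polynomial ℤ) ^ asc n (permWord n σ⁻¹) := by
  have hconv : ∀ F : (ℕ → ℕ) → Polynomial ℤ,
      (∑ᶠ x ∈ {x : ℕ → ℕ | IsCayley n x}, F x) = ∑ x ∈ (cayley_finite n).toFinset, F x := by
    intro F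
    exact finsum_mem_eq_finite_toFinset_sum F (cayley_finite n)
  have hsmul : ∀ (k : ℕ) (p : Polynomial ℤ), (2 : ℕ) ^ k • p = (2 : Polynomial ℤ) ^ k * p := by
    intro k p
    rw [nsmul_eq_mul]
    push_cast
    ring
  constructor
  · rw [hconv, main_count n (fun d => (Polynomial.X : Polynomial ℤ) ^ d)]
    exact Finset.sum_congr rfl fun σ _ => hsmul _ _
  · rw [hconv, sdes_sum n,
      main_count n (fun d => (Polynomial.X : Polynomial ℤ) ^ ((n - 1) - d))]
    refine Finset.sum_congr rfl fun σ _ => ?_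
    rw [hsmul, asc_permWord n σ⁻¹]

end CayPaper
end

section
/- Let n ≥ 1 and let v be a Cayley permutation of length n. Then, as identities in ℤ[t]: (1+t)^{des(v)} = Σ_{u ∈ WI[n], Des(u) ⊆ Des(v)} t^{n − max(u)} and (1+t)^{des∘(v)} = Σ_{u ∈ WI[n], Des(u) ⊆ Des∘(v)} t^{n − max(u)}, where max(u) denotes the maximum value of u. -/
namespace CayPaper

/-- The weakly increasing Cayley permutation with descent set `T`. -/
noncomputable local instance : DecidableEq (ℕ → ℕ) := Classical.decEq _

/-- aux -/
def wordOf (n : ℕ) (T : Finset ℕ) : ℕ → ℕ := fun i =>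
  if 1 ≤ i ∧ i ≤ n then i - (T ∩ Finset.Icc 1 (i - 1)).card else 0

lemma card_inter_le (T : Finset ℕ) (i : ℕ) :
    (T ∩ Finset.Icc 1 (i - 1)).card ≤ i - 1 := by
  calc (T ∩ Finset.Icc 1 (i - 1)).card ≤ (Finset.Icc 1 (i - 1)).card :=
        Finset.card_le_card Finset.inter_subset_right
    _ = i - 1 := by rw [Nat.card_Icc]; omega

lemma wordOf_one (n : ℕ) (T : Finset ℕ) (hn : 1 ≤ n) : wordOf n T 1 = 1 := by
  simp [wordOf, hn]

lemma wordOf_step (n : ℕ) (T : Finset ℕ) (i : ℕ) (h1 : 1 ≤ i) (h2 : i + 1 ≤ n) :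
    wordOf n T (i + 1) = wordOf n T i + (if i ∈ T then 0 else 1) := by
  have hins : Finset.Icc 1 i = insert i (Finset.Icc 1 (i - 1)) := by
    ext j; simp only [Finset.mem_Icc, Finset.mem_insert]; omega
  have hnot : i ∉ Finset.Icc 1 (i - 1) := by simp [Finset.mem_Icc]; omega
  have hcard : (T ∩ Finset.Icc 1 i).card
      = (T ∩ Finset.Icc 1 (i - 1)).card + (if i ∈ T then 1 else 0) := by
    by_cases hi : i ∈ T
    · rw [hins, Finset.inter_insert_of_mem hi,
        Finset.card_insert_of_notMem (by simp [hnot]), if_pos hi]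
    · rw [hins, Finset.inter_insert_of_notMem hi, if_neg hi]; omega
  have hle := card_inter_le T i
  unfold wordOf
  rw [if_pos ⟨by omega, h2⟩, if_pos ⟨h1, by omega⟩]
  have : i + 1 - 1 = i := by omega
  rw [this]
  by_cases hi : i ∈ T <;> simp [hi] at hcard ⊢ <;> omega

lemma wordOf_mono (n : ℕ) (T : Finset ℕ) {a b : ℕ} (h1 : 1 ≤ a) (h2 : a ≤ b)
    (h3 : b ≤ n) : wordOf n T a ≤ wordOf n T b := by
  have hca : (T ∩ Finset.Icc 1 (a - 1)).card ≤ a - 1 := card_inter_le T a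
  have hmono : (T ∩ Finset.Icc 1 (a - 1)).card ≤ (T ∩ Finset.Icc 1 (b - 1)).card := by
    apply Finset.card_le_card
    exact Finset.inter_subset_inter (Finset.Subset.refl T)
      (Finset.Icc_subset_Icc_right (by omega))
  have hgap : (T ∩ Finset.Icc 1 (b - 1)).card
      ≤ (T ∩ Finset.Icc 1 (a - 1)).card + (b - a) := by
    have hsub : T ∩ Finset.Icc 1 (b - 1)
        ⊆ (T ∩ Finset.Icc 1 (a - 1)) ∪ Finset.Icc a (b - 1) := by
      intro j hj
      simp only [Finset.mem_inter, Finset.mem_Icc, Finset.mem_union] at hj ⊢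
      obtain ⟨hjT, hj1, hj2⟩ := hj
      by_cases hja : j ≤ a - 1
      · exact Or.inl ⟨hjT, hj1, hja⟩
      · exact Or.inr ⟨by omega, hj2⟩
    calc (T ∩ Finset.Icc 1 (b - 1)).card
        ≤ ((T ∩ Finset.Icc 1 (a - 1)) ∪ Finset.Icc a (b - 1)).card :=
          Finset.card_le_card hsub
      _ ≤ (T ∩ Finset.Icc 1 (a - 1)).card + (Finset.Icc a (b - 1)).card :=
          Finset.card_union_le _ _
      _ ≤ (T ∩ Finset.Icc 1 (a - 1)).card + (b - a) := by
          have : (Finset.Icc a (b - 1)).card = b - a := by rw [Nat.card_Icc]; omega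
          omega
  unfold wordOf
  rw [if_pos ⟨h1, by omega⟩, if_pos ⟨by omega, h3⟩]
  omega

lemma wordOf_ge_one (n : ℕ) (T : Finset ℕ) {i : ℕ} (h1 : 1 ≤ i) (h2 : i ≤ n) :
    1 ≤ wordOf n T i := by
  have := card_inter_le T i
  unfold wordOf
  rw [if_pos ⟨h1, h2⟩]
  omega

lemma wordOf_hits (n : ℕ) (T : Finset ℕ) :
    ∀ i, 1 ≤ i → i ≤ n → ∀ m, 1 ≤ m → m ≤ wordOf n T i →
      ∃ j, 1 ≤ j ∧ j ≤ i ∧ wordOf n T j = m := by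
  intro i
  induction i with
  | zero => omega
  | succ i ih =>
    intro _ hin m hm1 hm2
    rcases Nat.eq_zero_or_pos i with hi0 | hi1
    · subst hi0
      rw [wordOf_one n T (by omega)] at hm2
      exact ⟨1, le_refl 1, le_refl 1, by rw [wordOf_one n T (by omega)]; omega⟩
    · rw [wordOf_step n T i hi1 hin] at hm2
      by_cases hcase : m ≤ wordOf n T i
      · obtain ⟨j, hj1, hj2, hj3⟩ := ih hi1 (by omega) m hm1 hcase
        exact ⟨j, hj1, by omega, hj3⟩
      · refine ⟨i + 1, by omega, le_refl _, ?_⟩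
        rw [wordOf_step n T i hi1 hin]
        by_cases hi : i ∈ T <;> simp [hi] at hm2 ⊢ <;> omega

lemma wordOf_isWI (n : ℕ) (T : Finset ℕ) (hn : 1 ≤ n) : IsWI n (wordOf n T) := by
  refine ⟨⟨?_, ⟨wordOf n T n, ?_⟩⟩, ?_⟩
  · intro i hi
    simp only [Set.mem_Icc, not_and, not_le] at hi
    unfold wordOf
    rw [if_neg]; omega
  · ext m
    simp only [Set.mem_image, Set.mem_Icc]
    constructor
    · rintro ⟨j, ⟨hj1, hj2⟩, rfl⟩
      exact ⟨wordOf_ge_one n T hj1 hj2, wordOf_mono n T hj1 hj2 le_rfl⟩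
    · rintro ⟨hm1, hm2⟩
      obtain ⟨j, hj1, hj2, hj3⟩ := wordOf_hits n T n hn le_rfl m hm1 hm2
      exact ⟨j, ⟨hj1, hj2⟩, hj3⟩
  · intro a ha b hb hab
    exact wordOf_mono n T ha.1 hab hb.2

lemma wordOf_desSet (n : ℕ) (T : Finset ℕ) (hT : T ⊆ Finset.Icc 1 (n - 1)) :
    desSet n (wordOf n T) = T := by
  ext i
  simp only [desSet, Finset.mem_filter, Finset.mem_Icc]
  constructor
  · rintro ⟨⟨hi1, hi2⟩, hle⟩
    have hn2 : i + 1 ≤ n := by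
      have : 1 ≤ n - 1 := le_trans hi1 hi2; omega
    rw [wordOf_step n T i hi1 hn2] at hle
    by_cases hi : i ∈ T
    · exact hi
    · rw [if_neg hi] at hle; omega
  · intro hi
    have hmem := hT hi
    simp only [Finset.mem_Icc] at hmem
    have hn2 : i + 1 ≤ n := by omega
    refine ⟨⟨hmem.1, hmem.2⟩, ?_⟩
    rw [wordOf_step n T i hmem.1 hn2, if_pos hi]
    omega

lemma wmax_eq_last (n : ℕ) (u : ℕ → ℕ) (hn : 1 ≤ n)
    (hm : MonotoneOn u (Set.Icc 1 n)) : wmax n u = u n := by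
  apply le_antisymm
  · apply Finset.sup_le
    intro i hi
    simp only [Finset.mem_Icc] at hi
    exact hm ⟨hi.1, hi.2⟩ ⟨hn, le_rfl⟩ hi.2
  · exact Finset.le_sup (by simp [Finset.mem_Icc, hn])

lemma wmax_wordOf (n : ℕ) (T : Finset ℕ) (hn : 1 ≤ n)
    (hT : T ⊆ Finset.Icc 1 (n - 1)) : n - wmax n (wordOf n T) = T.card := by
  rw [wmax_eq_last n (wordOf n T) hn (wordOf_isWI n T hn).2]
  have hTcap : T ∩ Finset.Icc 1 (n - 1) = T := Finset.inter_eq_left.mpr hT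
  have hTc : T.card ≤ n - 1 := by
    calc T.card ≤ (Finset.Icc 1 (n - 1)).card := Finset.card_le_card hT
      _ = n - 1 := by rw [Nat.card_Icc]; omega
  unfold wordOf
  rw [if_pos ⟨hn, le_rfl⟩, hTcap]
  have : (Finset.Icc 1 (n - 1)).card = n - 1 := by rw [Nat.card_Icc]; omega
  omega

lemma eq_wordOf (n : ℕ) (u : ℕ → ℕ) (hn : 1 ≤ n) (hu : IsWI n u) :
    u = wordOf n (desSet n u) := by
  obtain ⟨⟨hword, k, himg⟩, hmono⟩ := hu
  -- u 1 = 1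
  have hu1mem : u 1 ∈ Set.Icc 1 k := by
    rw [← himg]; exact ⟨1, ⟨le_rfl, hn⟩, rfl⟩
  have hk1 : 1 ≤ k := le_trans hu1mem.1 hu1mem.2
  have hone : ∃ j, 1 ≤ j ∧ j ≤ n ∧ u j = 1 := by
    have : (1 : ℕ) ∈ u '' Set.Icc 1 n := by rw [himg]; exact ⟨le_rfl, hk1⟩
    obtain ⟨j, hj, hj2⟩ := this
    exact ⟨j, hj.1, hj.2, hj2⟩
  have hu1 : u 1 = 1 := by
    obtain ⟨j, hj1, hj2, hj3⟩ := hone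
    have h1 := hmono (Set.mem_Icc.mpr ⟨le_rfl, hn⟩) (Set.mem_Icc.mpr ⟨hj1, hj2⟩) hj1
    have h2 : 1 ≤ u 1 := hu1mem.1
    omega
  -- step
  have hstep : ∀ i, 1 ≤ i → i + 1 ≤ n →
      u (i + 1) = u i + (if i ∈ desSet n u then 0 else 1) := by
    intro i hi1 hi2
    have hle : u i ≤ u (i + 1) :=
      hmono (Set.mem_Icc.mpr ⟨hi1, by omega⟩) (Set.mem_Icc.mpr ⟨by omega, hi2⟩)
        (by omega)
    have hbd : u (i + 1) ≤ u i + 1 := by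
      by_contra hc
      push_neg at hc
      have hui1 : u (i + 1) ∈ Set.Icc 1 k := by
        rw [← himg]; exact ⟨i + 1, ⟨by omega, hi2⟩, rfl⟩
      have : u i + 1 ∈ u '' Set.Icc 1 n := by
        rw [himg]; exact ⟨by omega, by have := hui1.2; omega⟩
      obtain ⟨j, hjmem, hj3⟩ := this
      rw [Set.mem_Icc] at hjmem
      obtain ⟨hj1, hj2⟩ := hjmem
      rcases le_or_gt j i with hji | hji
      · have := hmono (Set.mem_Icc.mpr ⟨hj1, by omega⟩)
          (Set.mem_Icc.mpr ⟨hi1, by omega⟩) hji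
        omega
      · have := hmono (Set.mem_Icc.mpr ⟨by omega, hi2⟩)
          (Set.mem_Icc.mpr ⟨hj1, hj2⟩) (by omega)
        omega
    have hdes : i ∈ desSet n u ↔ u (i + 1) ≤ u i := by
      simp only [desSet, Finset.mem_filter, Finset.mem_Icc]
      constructor
      · exact fun h => h.2
      · intro h; exact ⟨⟨hi1, by omega⟩, h⟩
    by_cases hd : i ∈ desSet n u
    · rw [if_pos hd]; have := hdes.mp hd; omega
    · rw [if_neg hd]
      have h' : ¬ u (i + 1) ≤ u i := fun h => hd (hdes.mpr h)
      omega
  funext i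
  by_cases hi : 1 ≤ i ∧ i ≤ n
  · obtain ⟨hi1, hi2⟩ := hi
    clear hone hu1mem
    induction i with
    | zero => omega
    | succ i ih =>
      rcases Nat.eq_zero_or_pos i with h0 | h1
      · subst h0; rw [wordOf_one n _ hn]; exact hu1
      · rw [hstep i h1 hi2, wordOf_step n _ i h1 hi2, ih h1 (by omega)]
  · push_neg at hi
    rw [hword i (by simp only [Set.mem_Icc]; omega)]
    unfold wordOf
    rw [if_neg (by omega)]

lemma set_eq (n : ℕ) (hn : 1 ≤ n) (S : Finset ℕ) (hS : S ⊆ Finset.Icc 1 (n - 1)) :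
    {u : ℕ → ℕ | IsWI n u ∧ desSet n u ⊆ S}
      = ↑(S.powerset.image (wordOf n)) := by
  ext u
  simp only [Set.mem_setOf_eq, Finset.coe_image, Set.mem_image, Finset.mem_coe,
    Finset.mem_powerset]
  constructor
  · rintro ⟨h1, h2⟩
    exact ⟨desSet n u, h2, (eq_wordOf n u hn h1).symm⟩
  · rintro ⟨T, hT, rfl⟩
    refine ⟨wordOf_isWI n T hn, ?_⟩
    rw [wordOf_desSet n T (hT.trans hS)]
    exact hT

lemma key_s10 (n : ℕ) (hn : 1 ≤ n) (S : Finset ℕ) (hS : S ⊆ Finset.Icc 1 (n - 1)) :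
    ((1 + Polynomial.X : Polynomial ℤ) ^ S.card
      = ∑ᶠ u ∈ {u : ℕ → ℕ | IsWI n u ∧ desSet n u ⊆ S},
          (Polynomial.X : Polynomial ℤ) ^ (n - wmax n u)) := by
  rw [set_eq n hn S hS, finsum_mem_coe_finset]
  rw [Finset.sum_image (f := fun u => (Polynomial.X : Polynomial ℤ) ^ (n - wmax n u))
    (g := wordOf n) ?inj]
  case inj =>
    intro T hT T' hT' h
    simp only [Finset.mem_coe, Finset.mem_powerset] at hT hT'
    rw [← wordOf_desSet n T (hT.trans hS), ← wordOf_desSet n T' (hT'.trans hS), h]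
  have hterm : ∀ T ∈ S.powerset,
      (Polynomial.X : Polynomial ℤ) ^ (n - wmax n (wordOf n T))
        = (Polynomial.X : Polynomial ℤ) ^ T.card := by
    intro T hT
    rw [wmax_wordOf n T hn ((Finset.mem_powerset.mp hT).trans hS)]
  rw [Finset.sum_congr rfl hterm]
  have := Finset.prod_add (fun _ : ℕ => (Polynomial.X : Polynomial ℤ))
    (fun _ : ℕ => (1 : Polynomial ℤ)) S
  simp only [Finset.prod_const, Finset.prod_const_one, one_pow, mul_one] at this
  rw [add_comm] at this
  rw [← this]

/-- Lemma 6.2: `(1+t)^{des(v)} = Σ_{u ∈ WI(v)} t^{n−max(u)}` and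
`(1+t)^{des∘(v)} = Σ_{u ∈ WI(v), Des(u) ⊆ Des∘(v)} t^{n−max(u)}` in `ℤ[t]`. -/
theorem stmt10 (n : ℕ) (hn : 1 ≤ n) (v : ℕ → ℕ) (hv : IsCayley n v) :
    ((1 + Polynomial.X : Polynomial ℤ) ^ des n v
      = ∑ᶠ u ∈ {u : ℕ → ℕ | IsWI n u ∧ desSet n u ⊆ desSet n v},
          (Polynomial.X : Polynomial ℤ) ^ (n - wmax n u)) ∧
    ((1 + Polynomial.X : Polynomial ℤ) ^ sdes n v
      = ∑ᶠ u ∈ {u : ℕ → ℕ | IsWI n u ∧ desSet n u ⊆ sdesSet n v},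
          (Polynomial.X : Polynomial ℤ) ^ (n - wmax n u)) := by
  constructor
  · exact key_s10 n hn (desSet n v) (Finset.filter_subset _ _)
  · exact key_s10 n hn (sdesSet n v) (Finset.filter_subset _ _)

end CayPaper
end
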